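/- Let g : ℝ → ℝ be L-Lipschitz with g(0) = 0, and let G denote its coordinatewise application to vectors. Let W be a real L'×D matrix, U a real L'×L' matrix, and x_1, …, x_J ∈ ℝ^D. Define the hidden states h_0 = 0 and h_k = G(W x_k + U h_{k−1}) for k = 1, …, J. Then for every 1 ≤ j ≤ J, ‖h_j‖ ≤ L ‖W‖_op Σ_{k=1}^{j} (L ‖U‖_op)^{j−k} ‖x_k‖. -/
import Mathlib


open scoped NNReal

lemma euclid_norm_le_of_pointwise {n : ℕ} (a b : EuclideanSpace ℝ (Fin n)) (C : ℝ) (hC : 0 ≤ C)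
    (hab : ∀ i, ‖a i‖ ≤ C * ‖b i‖) : ‖a‖ ≤ C * ‖b‖ := by
  rw [EuclideanSpace.norm_eq, EuclideanSpace.norm_eq,
    ← Real.sqrt_sq hC, ← Real.sqrt_mul (by positivity), Finset.mul_sum]
  apply Real.sqrt_le_sqrt
  apply Finset.sum_le_sum
  intro i _
  calc ‖a i‖ ^ 2 ≤ (C * ‖b i‖) ^ 2 := by
        apply pow_le_pow_left₀ (norm_nonneg _) (hab i)
    _ = C ^ 2 * ‖b i‖ ^ 2 := by ring

/-- Growth bound on RNN hidden states: with an `L`-Lipschitz activation `g` satisfying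
`g(0) = 0`, the hidden states `h_k = G(W x_k + U h_{k−1})`, `h_0 = 0`, satisfy
`‖h_j‖ ≤ L ‖W‖_op Σ_{k=1}^{j} (L ‖U‖_op)^{j−k} ‖x_k‖` (Euclidean / operator norms). -/
theorem rnn_hidden_state_growth_bound
    (L : ℝ≥0) (g : ℝ → ℝ) (hg : LipschitzWith L g) (hg0 : g 0 = 0)
    (L' D J : ℕ)
    (W : Matrix (Fin L') (Fin D) ℝ) (U : Matrix (Fin L') (Fin L') ℝ)
    (x : ℕ → EuclideanSpace ℝ (Fin D))
    (h : ℕ → EuclideanSpace ℝ (Fin L'))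
    (h0 : h 0 = 0)
    (hrec : ∀ k i, h (k + 1) i =
      g ((Matrix.toEuclideanLin W (x (k + 1)) + Matrix.toEuclideanLin U (h k)) i))
    (j : ℕ) (hj1 : 1 ≤ j) (hjJ : j ≤ J) :
    ‖h j‖ ≤ (L : ℝ) * ‖LinearMap.toContinuousLinearMap (Matrix.toEuclideanLin W)‖ *
      ∑ k ∈ Finset.Icc 1 j,
        ((L : ℝ) * ‖LinearMap.toContinuousLinearMap (Matrix.toEuclideanLin U)‖) ^ (j - k)
          * ‖x k‖ := by
  clear hjJ
  set cW := ‖LinearMap.toContinuousLinearMap (Matrix.toEuclideanLin W)‖ with hcW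
  set cU := ‖LinearMap.toContinuousLinearMap (Matrix.toEuclideanLin U)‖ with hcU
  -- pointwise Lipschitz bound
  have hptw : ∀ a : ℝ, ‖g a‖ ≤ (L : ℝ) * ‖a‖ := by
    intro a
    have := hg.dist_le_mul a 0
    simpa [hg0, Real.dist_eq, Real.norm_eq_abs] using this
  -- step bound
  have hstep : ∀ k, ‖h (k + 1)‖ ≤ (L : ℝ) * cW * ‖x (k + 1)‖ + (L : ℝ) * cU * ‖h k‖ := by
    intro k
    have h1 : ‖h (k + 1)‖ ≤
        (L : ℝ) * ‖Matrix.toEuclideanLin W (x (k + 1)) + Matrix.toEuclideanLin U (h k)‖ := by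
      apply euclid_norm_le_of_pointwise _ _ _ L.coe_nonneg
      intro i
      rw [hrec k i]
      exact hptw _
    have h2 : ‖Matrix.toEuclideanLin W (x (k + 1)) + Matrix.toEuclideanLin U (h k)‖ ≤
        cW * ‖x (k + 1)‖ + cU * ‖h k‖ := by
      refine (norm_add_le _ _).trans (add_le_add ?_ ?_)
      · have := (LinearMap.toContinuousLinearMap (Matrix.toEuclideanLin W)).le_opNorm (x (k + 1))
        simpa only [LinearMap.coe_toContinuousLinearMap'] using this
      · have := (LinearMap.toContinuousLinearMap (Matrix.toEuclideanLin U)).le_opNorm (h k)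
        simpa only [LinearMap.coe_toContinuousLinearMap'] using this
    calc ‖h (k + 1)‖ ≤ (L : ℝ) * (cW * ‖x (k + 1)‖ + cU * ‖h k‖) :=
          h1.trans (mul_le_mul_of_nonneg_left h2 L.coe_nonneg)
      _ = (L : ℝ) * cW * ‖x (k + 1)‖ + (L : ℝ) * cU * ‖h k‖ := by ring
  have hcW0 : (0:ℝ) ≤ cW := norm_nonneg _
  have hcU0 : (0:ℝ) ≤ cU := norm_nonneg _
  induction j, hj1 using Nat.le_induction with
  | base =>
    have := hstep 0
    rw [h0] at this
    simpa using this
  | succ n hn ih =>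
    calc ‖h (n + 1)‖ ≤ (L : ℝ) * cW * ‖x (n + 1)‖ + (L : ℝ) * cU * ‖h n‖ := hstep n
      _ ≤ (L : ℝ) * cW * ‖x (n + 1)‖ + (L : ℝ) * cU *
            ((L : ℝ) * cW * ∑ k ∈ Finset.Icc 1 n, ((L : ℝ) * cU) ^ (n - k) * ‖x k‖) := by
          gcongr
      _ = (L : ℝ) * cW * ∑ k ∈ Finset.Icc 1 (n + 1), ((L : ℝ) * cU) ^ (n + 1 - k) * ‖x k‖ := by
          rw [Finset.sum_Icc_succ_top (by omega : 1 ≤ n + 1)]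
          have hsum : ∑ k ∈ Finset.Icc 1 n, ((L : ℝ) * cU) ^ (n + 1 - k) * ‖x k‖
              = ((L : ℝ) * cU) * ∑ k ∈ Finset.Icc 1 n, ((L : ℝ) * cU) ^ (n - k) * ‖x k‖ := by
            rw [Finset.mul_sum]
            apply Finset.sum_congr rfl
            intro k hk
            have hk' : k ≤ n := (Finset.mem_Icc.mp hk).2
            have hnk : n + 1 - k = (n - k) + 1 := by omega
            rw [hnk, pow_succ]
            ring
          rw [mul_add, hsum, Nat.sub_self, pow_zero]
          ring
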